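/- Let C be a Grothendieck category with a Gabriel–Popescu embedding (U, Λ, S, Q). If there exists a functor H : C → Mod Λ preserving all small colimits such that Q ∘ H is naturally isomorphic to the identity functor of C, then C satisfies Ab4*: for every (small) index set J, the functor taking a J-indexed family of objects to its direct product is exact; equivalently, a J-indexed direct product of epimorphisms in C is an epimorphism. -/

import Mathlib

open CategoryTheory Limits Opposite

universe v u

/-- The left `End X`-module structure on `unop X ⟶ Y` for `X : Cᵒᵖ` (as in the older Mathlib
instance `moduleEndLeft`), given by `r • f = r.unop ≫ f`. -/
instance moduleEndLeftOfOp {C : Type u} [Category.{v} C] [Preadditive C] {X : Cᵒᵖ} {Y : C} :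
    Module (End X) (unop X ⟶ Y) where
  smul r f := r.unop ≫ f
  one_smul _ := Category.id_comp _
  mul_smul _ _ _ := Category.assoc _ _ _
  smul_add _ _ _ := Preadditive.comp_add _ _ _ _ _ _
  smul_zero _ := Limits.comp_zero
  add_smul _ _ _ := Preadditive.add_comp _ _ _ _ _ _
  zero_smul _ := Limits.zero_comp

/-- The older Mathlib `preadditiveCoyonedaObj (X : Cᵒᵖ) : C ⥤ ModuleCat (End X)`. -/
def preadditiveCoyonedaObjOp {C : Type u} [Category.{v} C] [Preadditive C] (X : Cᵒᵖ) :
    C ⥤ ModuleCat.{v} (End X) where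
  obj Y := ModuleCat.of _ (unop X ⟶ Y)
  map f := ModuleCat.ofHom
    { toFun := fun g => g ≫ f
      map_add' := fun _ _ => Preadditive.add_comp _ _ _ _ _ _
      map_smul' := fun _ _ => Category.assoc _ _ _ }

lemma moduleCat_pi_map_epi {R : Type v} [Ring R] {J : Type v} (X Y : J → ModuleCat.{v} R)
    (φ : ∀ j, X j ⟶ Y j) (hφ : ∀ j, Epi (φ j)) : Epi (Limits.Pi.map φ) := by
  have h : Epi ((ModuleCat.piIsoPi X).inv ≫ Limits.Pi.map φ ≫ (ModuleCat.piIsoPi Y).hom) := by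
    rw [ModuleCat.epi_iff_surjective]
    intro y
    choose x hx using fun j => (ModuleCat.epi_iff_surjective (φ j)).mp (hφ j) (y j)
    refine ⟨x, ?_⟩
    funext j
    show ((ModuleCat.piIsoPi Y).hom (Limits.Pi.map φ ((ModuleCat.piIsoPi X).inv x))) j = y j
    have h1 : ((ModuleCat.piIsoPi Y).hom (Limits.Pi.map φ ((ModuleCat.piIsoPi X).inv x))) j
        = Pi.π Y j (Limits.Pi.map φ ((ModuleCat.piIsoPi X).inv x)) :=
      ModuleCat.piIsoPi_hom_ker_subtype_apply Y j _
    have h2 : Pi.π Y j (Limits.Pi.map φ ((ModuleCat.piIsoPi X).inv x))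
        = φ j (Pi.π X j ((ModuleCat.piIsoPi X).inv x)) :=
      (elementwise_of% (show Limits.Pi.map φ ≫ Pi.π Y j = Pi.π X j ≫ φ j from limMap_π _ _)) _
    have h3 : Pi.π X j ((ModuleCat.piIsoPi X).inv x) = x j :=
      ModuleCat.piIsoPi_inv_kernel_ι_apply X j x
    rw [h1, h2, h3, hx]
  have h2 : Limits.Pi.map φ = (ModuleCat.piIsoPi X).hom ≫
      ((ModuleCat.piIsoPi X).inv ≫ Limits.Pi.map φ ≫ (ModuleCat.piIsoPi Y).hom) ≫
      (ModuleCat.piIsoPi Y).inv := by simp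
  rw [h2]
  exact epi_comp _ _

/-- A Gabriel–Popescu embedding for a Grothendieck category `C`: a generator `U`,
the functor `S = Hom_C(U, -)` to right modules over `Λ = End U` (realized as
`preadditiveCoyonedaObj (op U) : C ⥤ ModuleCat (End (op U))`, where the module structure
on `U ⟶ X` is given by precomposition, i.e. the right `End U`-module structure),
together with a left adjoint `Q` of `S` which is exact, such that `S` is fully faithful. -/
structure GabrielPopescuEmbedding (C : Type u) [Category.{v} C] [Abelian C] where
  U : C
  isSeparator : IsSeparator U
  Q : ModuleCat.{v} (End (op U)) ⥤ C
  adj : Q ⊣ preadditiveCoyonedaObjOp (op U)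
  qExact : PreservesFiniteLimits Q
  sFull : (preadditiveCoyonedaObjOp (op U)).Full
  sFaithful : (preadditiveCoyonedaObjOp (op U)).Faithful

/-- If a Grothendieck category `C` with a Gabriel–Popescu embedding `(U, Λ, S, Q)` admits a
cocontinuous functor `H : C ⥤ Mod Λ` with `Q ∘ H ≅ 𝟭 C`, then `C` satisfies Ab4*:
small products are exact; equivalently, any small product of epimorphisms is an epimorphism. -/
theorem stmt1 {C : Type u} [Category.{v} C] [Abelian C] [HasLimits C] [HasColimits C] [AB5 C]
    (E : GabrielPopescuEmbedding C)
    (H : C ⥤ ModuleCat.{v} (End (op E.U)))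
    (hH : PreservesColimits H)
    (hQH : H ⋙ E.Q ≅ 𝟭 C) :
    Nonempty (AB4Star C) ∧
    ∀ (J : Type v) (X Y : J → C) (φ : ∀ j, X j ⟶ Y j),
      (∀ j, Epi (φ j)) → Epi (Limits.Pi.map φ) := by
  haveI := hH
  haveI : E.Q.IsLeftAdjoint := ⟨_, ⟨E.adj⟩⟩
  have key : ∀ (J : Type v) (X Y : J → C) (φ : ∀ j, X j ⟶ Y j),
      (∀ j, Epi (φ j)) → Epi (Limits.Pi.map φ) := by
    intro J X Y φ hφ
    haveI : ∀ j, Epi (φ j) := hφ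
    haveI : ∀ j, Epi (H.map (φ j)) := fun j => H.map_epi _
    haveI hD : Epi (Limits.Pi.map (fun j => H.map (φ j))) :=
      moduleCat_pi_map_epi _ _ _ fun j => inferInstance
    let q : E.Q.obj (∏ᶜ fun j => H.obj (Y j)) ⟶ ∏ᶜ Y :=
      Pi.lift (fun j => E.Q.map (Pi.π _ j) ≫ hQH.hom.app (Y j))
    let p : E.Q.obj (∏ᶜ fun j => H.obj (X j)) ⟶ ∏ᶜ X :=
      Pi.lift (fun j => E.Q.map (Pi.π _ j) ≫ hQH.hom.app (X j))
    let s : ∏ᶜ Y ⟶ E.Q.obj (∏ᶜ fun j => H.obj (Y j)) :=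
      hQH.inv.app (∏ᶜ Y) ≫ E.Q.map (Pi.lift (fun j => H.map (Pi.π Y j)))
    have hsq : s ≫ q = 𝟙 _ := by
      apply Pi.hom_ext
      intro j
      have h3 := hQH.hom.naturality (Pi.π Y j)
      simp only [Functor.comp_map, Functor.id_map] at h3
      simp only [s, q, Category.assoc, limit.lift_π, Fan.mk_π_app, Category.id_comp,
        ← E.Q.map_comp_assoc]
      rw [h3]
      simp
    haveI : IsSplitEpi q := ⟨⟨⟨s, hsq⟩⟩⟩
    have hcomm : p ≫ Limits.Pi.map φ =
        E.Q.map (Limits.Pi.map (fun j => H.map (φ j))) ≫ q := by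
      apply Pi.hom_ext
      intro j
      have h3 := hQH.hom.naturality (φ j)
      simp only [Functor.comp_map, Functor.id_map] at h3
      have h4 : Limits.Pi.map (fun j => H.map (φ j)) ≫ Pi.π _ j
          = Pi.π _ j ≫ H.map (φ j) := limMap_π _ _
      simp only [p, q, Category.assoc, limMap_π, limit.lift_π, Fan.mk_π_app,
        Discrete.natTrans_app, ← E.Q.map_comp_assoc, h4]
      rw [E.Q.map_comp, Category.assoc, h3]
      simp
    haveI : Epi (E.Q.map (Limits.Pi.map fun j => H.map (φ j))) := E.Q.map_epi _
    have hpe : Epi (p ≫ Limits.Pi.map φ) := by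
      rw [hcomm]; exact epi_comp _ _
    exact @epi_of_epi _ _ _ _ _ p _ hpe
  refine ⟨⟨⟨fun α => ?_⟩⟩, key⟩
  haveI : (lim (J := Discrete α) (C := C)).Additive := by
    haveI := preservesBinaryBiproducts_of_preservesBinaryProducts
      (lim (J := Discrete α) (C := C))
    exact Functor.additive_of_preservesBinaryBiproducts _
  haveI : (lim (J := Discrete α) (C := C)).PreservesEpimorphisms := by
    constructor
    intro F G η hη
    haveI : Epi η := hη
    haveI hkey : Epi (Limits.Pi.map (fun j => η.app ⟨j⟩)) :=
      key α (fun j => F.obj ⟨j⟩) (fun j => G.obj ⟨j⟩) (fun j => η.app ⟨j⟩)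
        (fun j => inferInstance)
    let eF : ∏ᶜ (fun j => F.obj ⟨j⟩) ≅ lim.obj F :=
      Pi.isoLimit _ ≪≫ HasLimit.isoOfNatIso (Discrete.natIso (fun j => Iso.refl _))
    let eG : ∏ᶜ (fun j => G.obj ⟨j⟩) ≅ lim.obj G :=
      Pi.isoLimit _ ≪≫ HasLimit.isoOfNatIso (Discrete.natIso (fun j => Iso.refl _))
    have hcomm : Limits.Pi.map (fun j => η.app ⟨j⟩) ≫ eG.hom = eF.hom ≫ lim.map η := by
      apply limit.hom_ext
      rintro ⟨j⟩
      simp [eF, eG, limMap_π]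
    have heq : lim.map η = eF.inv ≫ Limits.Pi.map (fun j => η.app ⟨j⟩) ≫ eG.hom := by
      rw [hcomm, Iso.inv_hom_id_assoc]
    rw [heq]
    exact epi_comp _ _
  haveI := Functor.preservesHomology_of_preservesEpis_and_kernels
    (lim (J := Discrete α) (C := C))
  exact ⟨Functor.preservesFiniteColimits_of_preservesHomology _⟩
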